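/- Let D be bounded self-adjoint with 0 < m ≤ D_t = e^{tL}De^{tL*} ≤ M for all t ∈ ℝ. Then the propagator satisfies the uniform bound ‖e^{tL}‖ ≤ (M/m)^{1/2} for all t ∈ ℝ. -/

import Mathlib

open NormedSpace RealInnerProductSpace

/-- `D_t = e^{tL} D e^{tL*}`. -/
noncomputable def Dt {H : Type*} [NormedAddCommGroup H] [InnerProductSpace ℝ H]
    [CompleteSpace H] (L D : H →L[ℝ] H) (t : ℝ) : H →L[ℝ] H :=
  exp (t • L) * D * ContinuousLinearMap.adjoint (exp (t • L))

/-- If `D` is bounded self-adjoint with `0 < m ≤ D_t ≤ M` for all `t`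
(in the sense of quadratic forms), then `‖e^{tL}‖ ≤ (M/m)^{1/2}` for all `t`. -/
theorem stmt6 {H : Type*} [NormedAddCommGroup H] [InnerProductSpace ℝ H] [CompleteSpace H]
    (L D : H →L[ℝ] H) (hD : IsSelfAdjoint D) (m M : ℝ) (hm : 0 < m) (hmM : m ≤ M)
    (hbound : ∀ (t : ℝ) (x : H),
      m * ‖x‖ ^ 2 ≤ ⟪x, Dt L D t x⟫ ∧ ⟪x, Dt L D t x⟫ ≤ M * ‖x‖ ^ 2) :
    ∀ t : ℝ, ‖exp (t • L)‖ ≤ Real.sqrt (M / m) := by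
  intro t
  set A := exp (t • L) with hA
  have hD0 : Dt L D 0 = D := by
    ext x
    simp only [Dt, zero_smul, exp_zero, one_mul, ContinuousLinearMap.mul_apply]
    have h1 : ContinuousLinearMap.adjoint (1 : H →L[ℝ] H) = 1 := by
      rw [show (1 : H →L[ℝ] H) = ContinuousLinearMap.id ℝ H from rfl,
        ContinuousLinearMap.adjoint_id]
    rw [h1]; rfl
  have hkey : ∀ x : H, ‖ContinuousLinearMap.adjoint A x‖ ≤ Real.sqrt (M / m) * ‖x‖ := by
    intro x
    set y := ContinuousLinearMap.adjoint A x with hy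
    have h1 : m * ‖y‖ ^ 2 ≤ ⟪y, D y⟫ := by
      have := (hbound 0 y).1
      rwa [hD0] at this
    have h2 : ⟪x, Dt L D t x⟫ ≤ M * ‖x‖ ^ 2 := (hbound t x).2
    have heq : ⟪x, Dt L D t x⟫ = ⟪y, D y⟫ := by
      simp only [Dt, ContinuousLinearMap.mul_apply, hy]
      rw [← ContinuousLinearMap.adjoint_inner_left A]
    have hsq : ‖y‖ ^ 2 ≤ (M / m) * ‖x‖ ^ 2 := by
      rw [div_mul_eq_mul_div, le_div_iff₀ hm, mul_comm (‖y‖ ^ 2) m]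
      calc m * ‖y‖ ^ 2 ≤ ⟪y, D y⟫ := h1
        _ = ⟪x, Dt L D t x⟫ := heq.symm
        _ ≤ M * ‖x‖ ^ 2 := h2
    have := Real.sqrt_le_sqrt hsq
    rwa [Real.sqrt_sq (norm_nonneg y), Real.sqrt_mul (div_nonneg (hm.le.trans hmM) hm.le), Real.sqrt_sq (norm_nonneg x)] at this
  have hadj : ‖ContinuousLinearMap.adjoint A‖ ≤ Real.sqrt (M / m) :=
    ContinuousLinearMap.opNorm_le_bound _ (Real.sqrt_nonneg _) hkey
  calc ‖A‖ = ‖ContinuousLinearMap.adjoint A‖ :=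
      (LinearIsometryEquiv.norm_map ContinuousLinearMap.adjoint A).symm
    _ ≤ Real.sqrt (M / m) := hadj
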